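/- There exists a simple graph G and vertex pairs (u, v) and (u', v') such that u = u', some automorphism of G maps v to v', the links (u, v) and (u', v') are not automorphic, and d_G(u, v) ≠ d_G(u', v'). Consequently, a link representation that includes the shortest path length distinguishes two links that any pure GNN (whose link representation depends only on the endpoint representations computed by message passing from constant features) must identify. -/

import Mathlib

open Classical in
/-- The multiset of neighbors of a vertex. -/
noncomputable def nbhd {V : Type*} [Fintype V] (G : SimpleGraph V) (v : V) :
    Multiset V :=
  (Finset.univ.filter fun u => G.Adj v u).val

/-- Message passing: `x_v^0 = feat v` and
`x_v^{l+1} = upd (x_v^l) (agg {{x_u^l : u ∈ N(v)}})`. -/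
noncomputable def mp {V X Y : Type*} [Fintype V] (G : SimpleGraph V)
    (feat : V → X) (agg : Multiset X → Y) (upd : X → Y → X) : ℕ → V → X
  | 0 => feat
  | (l + 1) => fun v =>
      upd (mp G feat agg upd l v) (agg ((nbhd G v).map (mp G feat agg upd l)))

/-- The 6-cycle. -/
def C6 : SimpleGraph (Fin 6) where
  Adj v w := v - w = 1 ∨ w - v = 1
  symm := ⟨by intro v w h; tauto⟩
  loopless := ⟨by intro v h; simp at h⟩

instance : DecidableRel C6.Adj := fun v w => by unfold C6; simp only; infer_instance

lemma adj_parity : ∀ v w : Fin 6, C6.Adj v w → (v.val + w.val) % 2 = 1 := by decide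

lemma walk_parity : ∀ {a b : Fin 6} (p : C6.Walk a b),
    (a.val + b.val + p.length) % 2 = 0 := by
  intro a b p
  induction p with
  | nil => simp; omega
  | cons h p ih =>
      rename_i c d
      have := adj_parity _ _ h
      simp only [SimpleGraph.Walk.length_cons]
      omega

def w02 : C6.Walk 0 2 :=
  SimpleGraph.Walk.cons (v := 1) (by decide) (SimpleGraph.Walk.cons (by decide) .nil)
def w03 : C6.Walk 0 3 :=
  SimpleGraph.Walk.cons (v := 1) (by decide)
    (SimpleGraph.Walk.cons (v := 2) (by decide) (SimpleGraph.Walk.cons (by decide) .nil))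

lemma dist02 : C6.dist 0 2 = 2 := by
  have hle : C6.dist 0 2 ≤ 2 := by simpa [w02] using C6.dist_le w02
  have h0 : C6.dist 0 2 ≠ 0 := by
    rw [SimpleGraph.dist_ne_zero_iff_ne_and_reachable]
    exact ⟨by decide, ⟨w02⟩⟩
  have h1 : C6.dist 0 2 ≠ 1 := by
    simp only [ne_eq, SimpleGraph.dist_eq_one_iff_adj]; decide
  omega

lemma dist03 : C6.dist 0 3 = 3 := by
  have hle : C6.dist 0 3 ≤ 3 := by simpa [w03] using C6.dist_le w03
  have h0 : C6.dist 0 3 ≠ 0 := by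
    rw [SimpleGraph.dist_ne_zero_iff_ne_and_reachable]
    exact ⟨by decide, ⟨w03⟩⟩
  obtain ⟨p, hp⟩ := SimpleGraph.exists_walk_of_dist_ne_zero h0
  have hpar := walk_parity p
  have h1 : C6.dist 0 3 ≠ 1 := by
    simp only [ne_eq, SimpleGraph.dist_eq_one_iff_adj]; decide
  simp only [hp] at hpar
  omega

lemma nbhd_eq (v : Fin 6) : nbhd C6 v = (Finset.univ.filter fun u => C6.Adj v u).val := by
  unfold nbhd; congr!

lemma nbhd_card (v : Fin 6) : Multiset.card (nbhd C6 v) = 2 := by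
  rw [nbhd_eq]
  revert v; decide

lemma mp_const {X Y : Type} (c : X) (agg : Multiset X → Y) (upd : X → Y → X) :
    ∀ L (v : Fin 6), mp C6 (fun _ => c) agg upd L v = mp C6 (fun _ => c) agg upd L 0 := by
  intro L
  induction L with
  | zero => intro v; rfl
  | succ L ih =>
      intro v
      have e : ∀ w : Fin 6, ((nbhd C6 w).map (mp C6 (fun _ => c) agg upd L))
          = Multiset.replicate 2 (mp C6 (fun _ => c) agg upd L 0) := by
        intro w
        rw [Multiset.map_congr rfl (fun x _ => ih x), Multiset.map_const', nbhd_card]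
      simp only [mp]
      rw [ih v, e v, e 0]

theorem exists_links_distinguished_by_sp_not_by_pure_gnn :
    ∃ (n : ℕ) (G : SimpleGraph (Fin n)) (u v u' v' : Fin n),
      u = u' ∧
      (∃ σ : G ≃g G, σ v = v') ∧
      (¬ ∃ σ : G ≃g G, (fun x => σ x) '' {u, v} = {u', v'}) ∧
      G.dist u v ≠ G.dist u' v' ∧
      (∀ (X Y Z : Type) (c : X) (agg : Multiset X → Y) (upd : X → Y → X)
          (g : X → X → Z) (L : ℕ),
        g (mp G (fun _ => c) agg upd L u) (mp G (fun _ => c) agg upd L v)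
          = g (mp G (fun _ => c) agg upd L u') (mp G (fun _ => c) agg upd L v')) := by
  refine ⟨6, C6, 0, 2, 0, 3, rfl, ?_, ?_, ?_, ?_⟩
  · -- rotation automorphism
    exact ⟨⟨Equiv.addRight 1, fun {a b} =>
      (by decide : ∀ a b : Fin 6, C6.Adj (a + 1) (b + 1) ↔ C6.Adj a b) a b⟩, rfl⟩
  · rintro ⟨σ, hσ⟩
    simp only [Set.image_insert_eq, Set.image_singleton] at hσ
    have hmem0 : σ 0 ∈ ({0, 3} : Set (Fin 6)) := hσ ▸ Set.mem_insert _ _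
    have hmem2 : σ 2 ∈ ({0, 3} : Set (Fin 6)) := hσ ▸ Set.mem_insert_of_mem _ rfl
    have hne : σ 0 ≠ σ 2 := fun h => by simpa using σ.toEquiv.injective h
    have hle : C6.dist (σ 0) (σ 2) ≤ 2 := by
      simpa [w02] using C6.dist_le (w02.map σ.toHom)
    have h3 : C6.dist (σ 0) (σ 2) = 3 := by
      rcases hmem0 with h0 | h0 <;> rcases hmem2 with h2 | h2
      · exact absurd (h0.trans h2.symm) hne
      · rw [h0, h2, dist03]
      · rw [h0, h2, SimpleGraph.dist_comm, dist03]
      · exact absurd (h0.trans h2.symm) hne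
    omega
  · rw [dist02, dist03]; omega
  · intro X Y Z c agg upd g L
    rw [mp_const c agg upd L 2, mp_const c agg upd L 3]
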